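/- Let I be an implicational base over finite U that is not premise-connected, and let C be a premise-connected component of I. Then I is H-decomposable if and only if both I[C] and I[U \ C] are H-decomposable. -/

import Mathlib

open Finset

variable {α : Type*} [DecidableEq α]

/-- `C` is a model (closed set) of the implicational base `I`. -/
def IsModel (I : Finset (Finset α × α)) (C : Finset α) : Prop :=
  ∀ p ∈ I, p.1 ⊆ C → p.2 ∈ C

/-- The restriction `I[X]` of an implicational base to `X`. -/
def restrictIB (I : Finset (Finset α × α)) (X : Finset α) : Finset (Finset α × α) :=
  I.filter (fun p => p.1 ⊆ X ∧ p.2 ∈ X)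

/-- `I` is an implicational base over ground set `U`: premises are nonempty
and all elements lie in `U`. -/
def BaseOver (I : Finset (Finset α × α)) (U : Finset α) : Prop :=
  ∀ p ∈ I, p.1 ⊆ U ∧ p.2 ∈ U ∧ p.1.Nonempty

/-- `(U₁, U₂)` is a split of `I` over `U`. -/
def IsSplit (I : Finset (Finset α × α)) (U U₁ U₂ : Finset α) : Prop :=
  U₁ ∪ U₂ = U ∧ Disjoint U₁ U₂ ∧ U₁.Nonempty ∧ U₂.Nonempty ∧
  ∀ p ∈ I, p.1 ⊆ U₁ ∨ p.1 ⊆ U₂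

/-- An acyclic split: every cross implication has its premise in `U₁`. -/
def IsAcyclicSplit (I : Finset (Finset α × α)) (U U₁ U₂ : Finset α) : Prop :=
  IsSplit I U U₁ U₂ ∧
  ∀ p ∈ I, ¬ (p.1 ⊆ U₁ ∧ p.2 ∈ U₁) → ¬ (p.1 ⊆ U₂ ∧ p.2 ∈ U₂) → p.1 ⊆ U₁

/-- Two elements lie together in the premise of some implication. -/
def PremiseStep (I : Finset (Finset α × α)) (u v : α) : Prop :=
  ∃ p ∈ I, u ∈ p.1 ∧ v ∈ p.1

/-- Every pair of elements of `S` is joined by a premise-path. -/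
def PremiseConnectedOn (I : Finset (Finset α × α)) (S : Finset α) : Prop :=
  ∀ u ∈ S, ∀ v ∈ S, Relation.ReflTransGen (PremiseStep I) u v

/-- `C` is a premise-connected component of `I` over `U`. -/
def IsComponent (I : Finset (Finset α × α)) (U C : Finset α) : Prop :=
  C ⊆ U ∧ PremiseConnectedOn I C ∧
  ∀ C' : Finset α, C ⊆ C' → C' ⊆ U → PremiseConnectedOn I C' → C' = C

/-- The closure system (family of models included in `U`) of `I`. -/
def Fam (I : Finset (Finset α × α)) (U : Finset α) : Set (Finset α) :=
  {C | C ⊆ U ∧ IsModel I C}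

/-- `M` is meet-irreducible in the closure system `F` with top `U`. -/
def MeetIrred (F : Set (Finset α)) (U M : Finset α) : Prop :=
  M ∈ F ∧ M ≠ U ∧ ∀ A ∈ F, ∀ B ∈ F, M = A ∩ B → M = A ∨ M = B

/-- A full rooted binary decomposition tree for an implicational base. -/
inductive ITree (α : Type*) where
  | leaf (v : α)
  | node (l r : ITree α) (lab : Finset (Finset α × α))

/-- Leaf labels of the tree. -/
def ITree.elems : ITree α → Finset α
  | .leaf v => {v}
  | .node l r _ => l.elems ∪ r.elems

/-- All implications labeling nodes of the tree. -/
def ITree.impls : ITree α → Finset (Finset α × α)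
  | .leaf _ => ∅
  | .node l r lab => lab ∪ l.impls ∪ r.impls

/-- Validity of an `I`-tree: leaf labels partition the ground set, node
labels partition the implications, and every implication labeling a node has
its premise among the leaves of one child and its conclusion among the leaves
of the other. -/
def ITree.valid : ITree α → Prop
  | .leaf _ => True
  | .node l r lab =>
      Disjoint l.elems r.elems ∧
      (∀ p ∈ lab, (p.1 ⊆ l.elems ∧ p.2 ∈ r.elems) ∨
        (p.1 ⊆ r.elems ∧ p.2 ∈ l.elems)) ∧
      Disjoint lab (l.impls ∪ r.impls) ∧ Disjoint l.impls r.impls ∧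
      l.valid ∧ r.valid

/-- `I` over `U` admits an `I`-tree (hierarchical decomposition). -/
def HDecomposable (I : Finset (Finset α × α)) (U : Finset α) : Prop :=
  (U = ∅ ∧ I = ∅) ∨ ∃ t : ITree α, t.valid ∧ t.elems = U ∧ t.impls = I


lemma impls_mem_elems {t : ITree α} (hv : t.valid) :
    ∀ p ∈ t.impls, p.1 ⊆ t.elems ∧ p.2 ∈ t.elems := by
  induction t with
  | leaf v => intro p hp; simp [ITree.impls] at hp
  | node l r lab ihl ihr =>
    obtain ⟨hd, hcross, _, _, hvl, hvr⟩ := hv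
    intro p hp
    simp only [ITree.impls, Finset.mem_union] at hp
    simp only [ITree.elems]
    rcases hp with (hp | hp) | hp
    · rcases hcross p hp with ⟨h1, h2⟩ | ⟨h1, h2⟩
      · exact ⟨h1.trans Finset.subset_union_left, Finset.mem_union_right _ h2⟩
      · exact ⟨h1.trans Finset.subset_union_right, Finset.mem_union_left _ h2⟩
    · obtain ⟨h1, h2⟩ := ihl hvl p hp
      exact ⟨h1.trans Finset.subset_union_left, Finset.mem_union_left _ h2⟩
    · obtain ⟨h1, h2⟩ := ihr hvr p hp
      exact ⟨h1.trans Finset.subset_union_right, Finset.mem_union_right _ h2⟩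

/-- Restriction of a decomposition tree to a subset `X` of the ground set. -/
def ITree.restr (X : Finset α) : ITree α → Option (ITree α)
  | .leaf v => if v ∈ X then some (.leaf v) else none
  | .node l r lab =>
    match restr X l, restr X r with
    | none, none => none
    | some l', none => some l'
    | none, some r' => some r'
    | some l', some r' =>
        some (.node l' r' (lab.filter fun p => p.1 ⊆ X ∧ p.2 ∈ X))

lemma restrictIB_union (a b : Finset (Finset α × α)) (X : Finset α) :
    restrictIB (a ∪ b) X = restrictIB a X ∪ restrictIB b X :=
  Finset.filter_union _ _ _

lemma restrictIB_subset (a : Finset (Finset α × α)) (X : Finset α) :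
    restrictIB a X ⊆ a := Finset.filter_subset _ _

lemma restr_spec (X : Finset α) (t : ITree α) (hv : t.valid)
    (hne : ∀ p ∈ t.impls, p.1.Nonempty) :
    (ITree.restr X t = none ∧ t.elems ∩ X = ∅) ∨
    (∃ t', ITree.restr X t = some t' ∧ t'.valid ∧ t'.elems = t.elems ∩ X ∧
      t'.impls = restrictIB t.impls X ∧ t'.elems.Nonempty) := by
  induction t with
  | leaf v =>
    by_cases h : v ∈ X
    · right
      refine ⟨.leaf v, by simp [ITree.restr, h], trivial, by simp [ITree.elems, h], ?_, ?_⟩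
      · simp [ITree.impls, restrictIB]
      · simp [ITree.elems]
    · left
      constructor
      · simp [ITree.restr, h]
      · show ({v} : Finset α) ∩ X = ∅
        exact Finset.singleton_inter_of_notMem h
  | node l r lab ihl ihr =>
    obtain ⟨hd, hcross, hd2, hd3, hvl, hvr⟩ := hv
    have hlabimp : lab ⊆ (ITree.node l r lab).impls := by
      simp only [ITree.impls]
      exact (Finset.subset_union_left).trans Finset.subset_union_left
    have hlimp : l.impls ⊆ (ITree.node l r lab).impls := by
      simp only [ITree.impls]
      exact (Finset.subset_union_right).trans Finset.subset_union_left
    have hrimp : r.impls ⊆ (ITree.node l r lab).impls := by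
      simp only [ITree.impls]; exact Finset.subset_union_right
    have hnel : ∀ p ∈ l.impls, p.1.Nonempty := fun p hp => hne p (hlimp hp)
    have hner : ∀ p ∈ r.impls, p.1.Nonempty := fun p hp => hne p (hrimp hp)
    -- helper: if a side has empty intersection with X, implications living
    -- inside that side cannot be in the restriction
    have hrestr_sub : ∀ (J : Finset (Finset α × α)) (E : Finset α),
        (∀ p ∈ J, p.1 ⊆ E ∧ p.1.Nonempty) → E ∩ X = ∅ → restrictIB J X = ∅ := by
      intro J E hJ hE
      rw [Finset.eq_empty_iff_forall_notMem]
      intro p hp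
      rw [restrictIB, Finset.mem_filter] at hp
      obtain ⟨hpJ, hpX, _⟩ := hp
      obtain ⟨hsub, ⟨a, ha⟩⟩ := hJ p hpJ
      have : a ∈ E ∩ X := Finset.mem_inter.2 ⟨hsub ha, hpX ha⟩
      rw [hE] at this; exact absurd this (Finset.notMem_empty a)
    rcases ihl hvl hnel with ⟨hl0, hl1⟩ | ⟨l', hl0, hl1, hl2, hl3, hl4⟩ <;>
      rcases ihr hvr hner with ⟨hr0, hr1⟩ | ⟨r', hr0, hr1, hr2, hr3, hr4⟩
    · left
      constructor
      · simp [ITree.restr, hl0, hr0]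
      · simp only [ITree.elems, Finset.union_inter_distrib_right, hl1, hr1,
          Finset.union_empty]
    · -- left empty, right survives
      have hlab0 : restrictIB lab X = ∅ := by
        rw [Finset.eq_empty_iff_forall_notMem]
        intro p hp
        rw [restrictIB, Finset.mem_filter] at hp
        obtain ⟨hpl, hpX, hp2X⟩ := hp
        rcases hcross p hpl with ⟨h1, h2⟩ | ⟨h1, h2⟩
        · obtain ⟨a, ha⟩ := hne p (hlabimp hpl)
          have : a ∈ l.elems ∩ X := Finset.mem_inter.2 ⟨h1 ha, hpX ha⟩
          rw [hl1] at this; exact absurd this (Finset.notMem_empty a)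
        · have : p.2 ∈ l.elems ∩ X := Finset.mem_inter.2 ⟨h2, hp2X⟩
          rw [hl1] at this; exact absurd this (Finset.notMem_empty _)
      have hli0 : restrictIB l.impls X = ∅ :=
        hrestr_sub l.impls l.elems
          (fun p hp => ⟨(impls_mem_elems hvl p hp).1, hnel p hp⟩) hl1
      right
      refine ⟨r', by simp [ITree.restr, hl0, hr0], hr1, ?_, ?_, hr4⟩
      · rw [hr2]
        simp only [ITree.elems, Finset.union_inter_distrib_right, hl1,
          Finset.empty_union]
      · rw [hr3]
        simp only [ITree.impls, restrictIB_union, hlab0, hli0,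
          Finset.empty_union, Finset.union_empty]
    · -- right empty, left survives
      have hlab0 : restrictIB lab X = ∅ := by
        rw [Finset.eq_empty_iff_forall_notMem]
        intro p hp
        rw [restrictIB, Finset.mem_filter] at hp
        obtain ⟨hpl, hpX, hp2X⟩ := hp
        rcases hcross p hpl with ⟨h1, h2⟩ | ⟨h1, h2⟩
        · have : p.2 ∈ r.elems ∩ X := Finset.mem_inter.2 ⟨h2, hp2X⟩
          rw [hr1] at this; exact absurd this (Finset.notMem_empty _)
        · obtain ⟨a, ha⟩ := hne p (hlabimp hpl)
          have : a ∈ r.elems ∩ X := Finset.mem_inter.2 ⟨h1 ha, hpX ha⟩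
          rw [hr1] at this; exact absurd this (Finset.notMem_empty a)
      have hri0 : restrictIB r.impls X = ∅ :=
        hrestr_sub r.impls r.elems
          (fun p hp => ⟨(impls_mem_elems hvr p hp).1, hner p hp⟩) hr1
      right
      refine ⟨l', by simp [ITree.restr, hl0, hr0], hl1, ?_, ?_, hl4⟩
      · rw [hl2]
        simp only [ITree.elems, Finset.union_inter_distrib_right, hr1,
          Finset.union_empty]
      · rw [hl3]
        simp only [ITree.impls, restrictIB_union, hlab0, hri0,
          Finset.empty_union, Finset.union_empty]
    · -- both survive
      right
      set lab' := lab.filter fun p => p.1 ⊆ X ∧ p.2 ∈ X with hlab'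
      refine ⟨.node l' r' lab', by simp [ITree.restr, hl0, hr0, hlab'], ?_, ?_, ?_, ?_⟩
      · refine ⟨?_, ?_, ?_, ?_, hl1, hr1⟩
        · rw [hl2, hr2]
          exact hd.mono Finset.inter_subset_left Finset.inter_subset_left
        · intro p hp
          rw [hlab', Finset.mem_filter] at hp
          obtain ⟨hpl, hpX, hp2X⟩ := hp
          rcases hcross p hpl with ⟨h1, h2⟩ | ⟨h1, h2⟩
          · left
            rw [hl2, hr2]
            exact ⟨Finset.subset_inter h1 hpX, Finset.mem_inter.2 ⟨h2, hp2X⟩⟩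
          · right
            rw [hl2, hr2]
            exact ⟨Finset.subset_inter h1 hpX, Finset.mem_inter.2 ⟨h2, hp2X⟩⟩
        · refine hd2.mono (Finset.filter_subset _ _) ?_
          rw [hl3, hr3]
          exact Finset.union_subset_union (restrictIB_subset _ _)
            (restrictIB_subset _ _)
        · rw [hl3, hr3]
          exact hd3.mono (restrictIB_subset _ _) (restrictIB_subset _ _)
      · simp only [ITree.elems, hl2, hr2, Finset.union_inter_distrib_right]
      · simp only [ITree.impls, hl3, hr3, restrictIB_union, hlab']
        rfl
      · simp only [ITree.elems]
        exact hl4.mono Finset.subset_union_left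

lemma conn_union {I : Finset (Finset α × α)} {C : Finset α}
    (hconn : PremiseConnectedOn I C) {p : Finset α × α} (hp : p ∈ I)
    {x : α} (hxC : x ∈ C) (hxA : x ∈ p.1) :
    PremiseConnectedOn I (C ∪ p.1) := by
  have step : ∀ a ∈ p.1, ∀ b ∈ p.1, Relation.ReflTransGen (PremiseStep I) a b :=
    fun a ha b hb => Relation.ReflTransGen.single ⟨p, hp, ha, hb⟩
  intro u hu v hv
  have hux : Relation.ReflTransGen (PremiseStep I) u x := by
    rcases Finset.mem_union.1 hu with h | h
    · exact hconn u h x hxC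
    · exact step u h x hxA
  have hxv : Relation.ReflTransGen (PremiseStep I) x v := by
    rcases Finset.mem_union.1 hv with h | h
    · exact hconn x hxC v h
    · exact step x hxA v h
  exact hux.trans hxv

/-- `I` is H-decomposable iff the restrictions to a
premise-connected component `C` and to its complement are H-decomposable. -/
theorem hdecomposable_iff_components (I : Finset (Finset α × α)) (U C : Finset α)
    (hI : BaseOver I U) (hnc : ¬ PremiseConnectedOn I U)
    (hC : IsComponent I U C) :
    HDecomposable I U ↔
      HDecomposable (restrictIB I C) C ∧
      HDecomposable (restrictIB I (U \ C)) (U \ C) := by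
  obtain ⟨hCU, hCconn, hCmax⟩ := hC
  have hUne : U.Nonempty := by
    rcases Finset.eq_empty_or_nonempty U with h | h
    · exact absurd (fun u hu v hv => absurd hu (by simp [h])) hnc
    · exact h
  have hCne : C.Nonempty := by
    rcases C.eq_empty_or_nonempty with h | h
    · obtain ⟨u, hu⟩ := hUne
      have := hCmax {u} (by simp [h]) (by simp [hu])
        (fun a ha b hb => by
          simp only [Finset.mem_singleton] at ha hb
          subst ha; subst hb; exact Relation.ReflTransGen.refl)
      rw [h] at this
      simp at this
    · exact h
  have hUCne : (U \ C).Nonempty := by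
    rcases (U \ C).eq_empty_or_nonempty with h | h
    · have hUC : U ⊆ C := by
        intro x hx
        by_contra hxc
        have : x ∈ U \ C := Finset.mem_sdiff.2 ⟨hx, hxc⟩
        rw [h] at this; exact absurd this (Finset.notMem_empty x)
      have hUeq : U = C := le_antisymm hUC hCU
      exact absurd (hUeq ▸ hCconn) hnc
    · exact h
  have hprem : ∀ p ∈ I, p.1 ⊆ C ∨ p.1 ⊆ U \ C := by
    intro p hp
    by_cases hint : (p.1 ∩ C).Nonempty
    · left
      obtain ⟨x, hx⟩ := hint
      rw [Finset.mem_inter] at hx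
      have hconn' := conn_union hCconn hp hx.2 hx.1
      have heq := hCmax (C ∪ p.1) Finset.subset_union_left
        (Finset.union_subset hCU (hI p hp).1) hconn'
      intro a ha
      rw [← heq]
      exact Finset.mem_union_right _ ha
    · right
      intro a ha
      rw [Finset.mem_sdiff]
      exact ⟨(hI p hp).1 ha,
        fun hac => hint ⟨a, Finset.mem_inter.2 ⟨ha, hac⟩⟩⟩
  constructor
  · rintro (⟨hU0, hI0⟩ | ⟨t, hv, he, hi⟩)
    · exact absurd hU0 hUne.ne_empty
    · have hne' : ∀ p ∈ t.impls, p.1.Nonempty := by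
        rw [hi]; exact fun p hp => (hI p hp).2.2
      have key : ∀ X : Finset α, X ⊆ U → X.Nonempty →
          HDecomposable (restrictIB I X) X := by
        intro X hXU hXne
        rcases restr_spec X t hv hne' with ⟨_, hempty⟩ | ⟨t', _, htv, hte, hti, _⟩
        · rw [he, Finset.inter_eq_right.2 hXU] at hempty
          exact absurd hempty hXne.ne_empty
        · right
          exact ⟨t', htv, by rw [hte, he, Finset.inter_eq_right.2 hXU],
            by rw [hti, hi]⟩
      exact ⟨key C hCU hCne, key (U \ C) (Finset.sdiff_subset) hUCne⟩
  · rintro ⟨h1, h2⟩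
    rcases h1 with ⟨hC0, _⟩ | ⟨t1, hv1, he1, hi1⟩
    · exact absurd hC0 hCne.ne_empty
    rcases h2 with ⟨hUC0, _⟩ | ⟨t2, hv2, he2, hi2⟩
    · exact absurd hUC0 hUCne.ne_empty
    right
    set lab := I \ (restrictIB I C ∪ restrictIB I (U \ C)) with hlabdef
    refine ⟨.node t1 t2 lab, ⟨?_, ?_, ?_, ?_, hv1, hv2⟩, ?_, ?_⟩
    · rw [he1, he2]
      exact Finset.disjoint_sdiff
    · intro p hp
      rw [hlabdef, Finset.mem_sdiff, Finset.mem_union] at hp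
      obtain ⟨hpI, hpn⟩ := hp
      push_neg at hpn
      obtain ⟨hn1, hn2⟩ := hpn
      rcases hprem p hpI with hsub | hsub
      · left
        rw [he1, he2]
        refine ⟨hsub, ?_⟩
        have hb : p.2 ∉ C := fun hb =>
          hn1 (Finset.mem_filter.2 ⟨hpI, hsub, hb⟩)
        exact Finset.mem_sdiff.2 ⟨(hI p hpI).2.1, hb⟩
      · right
        rw [he1, he2]
        refine ⟨hsub, ?_⟩
        have hb : p.2 ∉ U \ C := fun hb =>
          hn2 (Finset.mem_filter.2 ⟨hpI, hsub, hb⟩)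
        by_contra hbc
        exact hb (Finset.mem_sdiff.2 ⟨(hI p hpI).2.1, hbc⟩)
    · rw [hi1, hi2, hlabdef]
      exact Finset.sdiff_disjoint
    · rw [hi1, hi2, Finset.disjoint_left]
      intro p hp1 hp2
      rw [restrictIB, Finset.mem_filter] at hp1 hp2
      obtain ⟨x, hx⟩ := (hI p hp1.1).2.2
      exact (Finset.mem_sdiff.1 (hp2.2.1 hx)).2 (hp1.2.1 hx)
    · show t1.elems ∪ t2.elems = U
      rw [he1, he2, Finset.union_sdiff_of_subset hCU]
    · show lab ∪ t1.impls ∪ t2.impls = I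
      rw [hi1, hi2, hlabdef, Finset.union_assoc,
        Finset.sdiff_union_of_subset
          (Finset.union_subset (restrictIB_subset I C) (restrictIB_subset I (U \ C)))]
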